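/- Let I₁,…,I_k be open subintervals of [a₀,b₀] with pairwise disjoint closures, and let φ : [a₀,b₀] \ (I₁ ∪ … ∪ I_k) → 𝕋 be continuous with values in the unit circle 𝕋 ⊆ ℂ. Then φ extends to a continuous function ψ : [a₀,b₀] → 𝕋. -/

import Mathlib

open Set

/-- Pasting lemma: continuity on a finite union of closed sets. -/
lemma contOn_iUnion_closed {α β : Type*} [TopologicalSpace α] [TopologicalSpace β]
    {ι : Type*} [Finite ι] {f : α → β} {T : ι → Set α}
    (hT : ∀ i, IsClosed (T i)) (h : ∀ i, ContinuousOn f (T i)) :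
    ContinuousOn f (⋃ i, T i) := by
  intro x hx
  rw [ContinuousWithinAt, nhdsWithin_iUnion, Filter.tendsto_iSup]
  intro i
  by_cases hxi : x ∈ T i
  · exact h i x hxi
  · exact continuousWithinAt_of_notMem_closure (by rwa [(hT i).closure_eq])

/-- Binary pasting lemma for closed sets. -/
lemma contOn_union_closed {α β : Type*} [TopologicalSpace α] [TopologicalSpace β]
    {f : α → β} {s t : Set α}
    (hs : IsClosed s) (ht : IsClosed t) (h1 : ContinuousOn f s) (h2 : ContinuousOn f t) :
    ContinuousOn f (s ∪ t) := by
  intro x hx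
  rw [ContinuousWithinAt, nhdsWithin_union, Filter.tendsto_sup]
  constructor
  · by_cases hxs : x ∈ s
    · exact h1 x hxs
    · exact continuousWithinAt_of_notMem_closure (by rwa [hs.closure_eq])
  · by_cases hxt : x ∈ t
    · exact h2 x hxt
    · exact continuousWithinAt_of_notMem_closure (by rwa [ht.closure_eq])

theorem stmt_4 (a₀ b₀ : ℝ) (hab : a₀ < b₀) (k : ℕ) (a b : Fin k → ℝ)
    (hsub : ∀ i, Set.Ioo (a i) (b i) ⊆ Set.Icc a₀ b₀)
    (hdisj : Pairwise fun i j => Disjoint (Set.Icc (a i) (b i)) (Set.Icc (a j) (b j)))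
    (φ : ℝ → ℂ)
    (hφcont : ContinuousOn φ (Set.Icc a₀ b₀ \ ⋃ i, Set.Ioo (a i) (b i)))
    (hφcirc : ∀ t ∈ Set.Icc a₀ b₀ \ ⋃ i, Set.Ioo (a i) (b i), ‖φ t‖ = 1) :
    ∃ ψ : ℝ → ℂ, ContinuousOn ψ (Set.Icc a₀ b₀) ∧
      (∀ t ∈ Set.Icc a₀ b₀, ‖ψ t‖ = 1) ∧
      (∀ t ∈ Set.Icc a₀ b₀ \ ⋃ i, Set.Ioo (a i) (b i), ψ t = φ t) := by
  classical
  set S : Set ℝ := Set.Icc a₀ b₀ \ ⋃ i, Set.Ioo (a i) (b i) with hS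
  set g : Fin k → ℝ → ℂ := fun i t =>
    φ (a i) * Complex.exp ((((φ (b i) / φ (a i)).arg * ((t - a i) / (b i - a i)) : ℝ)) * Complex.I)
    with hg
  set ψ : ℝ → ℂ := fun t =>
    if h : ∃ i, t ∈ Set.Ioo (a i) (b i) then g h.choose t else φ t with hψ
  have hIcc : ∀ i, a i < b i → Set.Icc (a i) (b i) ⊆ Set.Icc a₀ b₀ := by
    intro i hi
    rw [← closure_Ioo hi.ne]
    exact closure_minimal (hsub i) isClosed_Icc
  have hend : ∀ i, a i < b i → ∀ t, t = a i ∨ t = b i → ¬∃ j, t ∈ Set.Ioo (a j) (b j) := by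
    rintro i hi t ht ⟨j, hj⟩
    have htIcc : t ∈ Set.Icc (a i) (b i) := by
      rcases ht with h | h <;> subst h <;> simp [hi.le]
    rcases eq_or_ne j i with rfl | hne
    · rcases ht with rfl | rfl
      · exact lt_irrefl _ hj.1
      · exact lt_irrefl _ hj.2
    · exact Set.disjoint_left.mp (hdisj hne) (Set.mem_Icc_of_Ioo hj) htIcc
  have hendS : ∀ i, a i < b i → a i ∈ S ∧ b i ∈ S := by
    intro i hi
    refine ⟨⟨hIcc i hi (Set.left_mem_Icc.2 hi.le), fun h => ?_⟩,
      ⟨hIcc i hi (Set.right_mem_Icc.2 hi.le), fun h => ?_⟩⟩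
    · exact hend i hi (a i) (Or.inl rfl) (Set.mem_iUnion.1 h)
    · exact hend i hi (b i) (Or.inr rfl) (Set.mem_iUnion.1 h)
  have hψφ : ∀ t ∈ S, ψ t = φ t := by
    intro t ht
    have hne : ¬∃ i, t ∈ Set.Ioo (a i) (b i) := by
      intro ⟨i, hi⟩; exact ht.2 (Set.mem_iUnion.2 ⟨i, hi⟩)
    simp only [hψ]
    rw [dif_neg hne]
  have hψg : ∀ i, a i < b i → Set.EqOn ψ (g i) (Set.Icc (a i) (b i)) := by
    intro i hi t ht
    rcases eq_or_lt_of_le ht.1 with h1 | h1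
    · -- t = a i
      have hne : ¬∃ j, t ∈ Set.Ioo (a j) (b j) := hend i hi t (Or.inl h1.symm)
      have hgval : g i t = φ (a i) := by
        simp [hg, ← h1, sub_self, Complex.exp_zero]
      simp only [hψ]
      rw [dif_neg hne, hgval, ← h1]
    rcases eq_or_lt_of_le ht.2 with h2 | h2
    · -- t = b i
      have hne : ¬∃ j, t ∈ Set.Ioo (a j) (b j) := hend i hi t (Or.inr h2)
      have habs_a : ‖φ (a i)‖ = 1 := hφcirc _ (hendS i hi).1
      have habs_b : ‖φ (b i)‖ = 1 := hφcirc _ (hendS i hi).2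
      have ha0 : φ (a i) ≠ 0 := by
        intro h; rw [h] at habs_a; simp at habs_a
      have hgval : g i t = φ (b i) := by
        rw [hg]
        simp only [h2, div_self (sub_ne_zero.2 hi.ne'), mul_one]
        have habsq : ‖φ (b i) / φ (a i)‖ = 1 := by
          rw [norm_div, habs_a, habs_b]; norm_num
        have key := Complex.norm_mul_exp_arg_mul_I (φ (b i) / φ (a i))
        rw [habsq] at key
        push_cast at key
        rw [one_mul] at key
        rw [key]
        field_simp
      simp only [hψ]
      rw [dif_neg hne, hgval, h2]
    · -- t in the open interval
      have hmem : t ∈ Set.Ioo (a i) (b i) := ⟨h1, h2⟩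
      have hex : ∃ j, t ∈ Set.Ioo (a j) (b j) := ⟨i, hmem⟩
      have hj := hex.choose_spec
      have hchoose : hex.choose = i := by
        by_contra hne
        exact Set.disjoint_left.mp (hdisj hne) (Set.mem_Icc_of_Ioo hj)
          (Set.mem_Icc_of_Ioo hmem)
      simp only [hψ]
      rw [dif_pos hex, hchoose]
  set T : Fin k → Set ℝ := fun i => if a i < b i then Set.Icc (a i) (b i) else ∅ with hT
  have hTclosed : ∀ i, IsClosed (T i) := by
    intro i; rw [hT]; dsimp only; split <;> simp [isClosed_Icc]
  have hScl : IsClosed S := by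
    apply IsClosed.sdiff isClosed_Icc
    exact isOpen_iUnion fun i => isOpen_Ioo
  have hcover : Set.Icc a₀ b₀ ⊆ S ∪ ⋃ i, T i := by
    intro t ht
    by_cases h : ∃ i, t ∈ Set.Ioo (a i) (b i)
    · obtain ⟨i, hi⟩ := h
      have hlt : a i < b i := lt_trans hi.1 hi.2
      refine Or.inr (Set.mem_iUnion.2 ⟨i, ?_⟩)
      rw [hT]; dsimp only; rw [if_pos hlt]; exact Set.mem_Icc_of_Ioo hi
    · exact Or.inl ⟨ht, fun hmem => h (Set.mem_iUnion.1 hmem)⟩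
  have hgcont : ∀ i, Continuous (g i) := by
    intro i
    apply continuous_const.mul
    apply Complex.continuous_exp.comp
    apply Continuous.mul _ continuous_const
    exact Complex.continuous_ofReal.comp (by fun_prop)
  have hψcont : ContinuousOn ψ (Set.Icc a₀ b₀) := by
    apply ContinuousOn.mono _ hcover
    apply contOn_union_closed hScl (isClosed_iUnion_of_finite hTclosed)
    · exact hφcont.congr hψφ
    · apply contOn_iUnion_closed hTclosed
      intro i
      rw [hT]; dsimp only
      split
      · next hlt => exact ((hgcont i).continuousOn).congr (hψg i hlt)
      · exact continuousOn_empty _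
  refine ⟨ψ, hψcont, ?_, fun t ht => hψφ t ht⟩
  intro t ht
  by_cases h : ∃ i, t ∈ Set.Ioo (a i) (b i)
  · obtain ⟨i, hi⟩ := h
    have hlt : a i < b i := lt_trans hi.1 hi.2
    rw [hψg i hlt (Set.mem_Icc_of_Ioo hi), hg]
    simp only [norm_mul, Complex.norm_exp_ofReal_mul_I, mul_one]
    exact hφcirc _ (hendS i hlt).1
  · rw [hψφ t ⟨ht, fun hmem => h (Set.mem_iUnion.1 hmem)⟩]
    exact hφcirc t ⟨ht, fun hmem => h (Set.mem_iUnion.1 hmem)⟩
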